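/- arXiv:2505.19929 — 3 statements merged into one kernel-verified Lean document; each statement's English description precedes it below -/
import Mathlib

section
/- Let E be a real Banach space, let P : E →L[ℝ] E be a continuous linear map satisfying P ∘ P = P, and let g : E → E be any map. Let t₀ ≤ t₁ and let y : ℝ → E be differentiable on [t₀, t₁] with derivative y'(t) = P (g (y t)) for every t ∈ [t₀, t₁]. If P (y t₀) = y t₀, then P (y t) = y t for every t ∈ [t₀, t₁]. (This is the paper's Lemma stating that the solution of the ℓ-step of the projector-splitting/GAP algorithm remains in the span of the fixed basis X₀.) -/
/-- The solution of the ℓ-step of the projector-splitting/GAP algorithm remains in the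
span of the fixed basis: if `P` is an idempotent continuous linear map (a projection)
and `y` solves `∂ₜ y = P (g (y t))` on `[t₀, t₁]` with `P (y t₀) = y t₀`, then
`P (y t) = y t` for all `t ∈ [t₀, t₁]`. -/
theorem gap_ell_step_stays_in_span
    {E : Type*} [NormedAddCommGroup E] [NormedSpace ℝ E] [CompleteSpace E]
    (P : E →L[ℝ] E) (hP : ∀ x, P (P x) = P x) (g : E → E)
    (t₀ t₁ : ℝ) (ht : t₀ ≤ t₁) (y : ℝ → E)
    (hy : ∀ t ∈ Set.Icc t₀ t₁, HasDerivAt y (P (g (y t))) t)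
    (h0 : P (y t₀) = y t₀) :
    ∀ t ∈ Set.Icc t₀ t₁, P (y t) = y t := by
  set z : ℝ → E := fun t => y t - P (y t) with hz
  have hzderiv : ∀ t ∈ Set.Icc t₀ t₁, HasDerivAt z 0 t := by
    intro t htm
    have h1 := hy t htm
    have h2 := (P.hasFDerivAt.comp t (h1.hasFDerivAt)).hasDerivAt
    simp only [ContinuousLinearMap.coe_comp', Function.comp_apply] at h2
    have := h1.sub h2
    simpa [z, hP, Pi.sub_def, Function.comp_def] using this
  have hconst : ∀ t ∈ Set.Icc t₀ t₁, z t = z t₀ := by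
    intro t htm
    apply constant_of_has_deriv_right_zero (f := z)
    · intro s hs
      exact (hzderiv s hs).continuousAt.continuousWithinAt
    · intro s hs
      exact (hzderiv s (Set.mem_Icc_of_Ico hs)).hasDerivWithinAt
    · exact htm
  intro t htm
  have := hconst t htm
  simp only [z] at this
  have h0' : y t₀ - P (y t₀) = 0 := by rw [h0]; simp
  rw [h0'] at this
  exact (sub_eq_zero.mp this).symm
end

section
/- Let H be a real Hilbert space, K a closed subspace of H, and P : H →L[ℝ] H the orthogonal projection onto K. Let 𝓛 : H → H satisfy ‖𝓛 u − 𝓛 v‖ ≤ C·‖u − v‖ for all u, v ∈ H and ‖𝓛 u‖ ≤ B for all u ∈ H, with constants B, C ≥ 0. Let t₀ ≤ t₁ and let f, y : ℝ → H be differentiable on [t₀, t₁] with f'(t) = 𝓛 (f t) and y'(t) = P (𝓛 (y t)) for all t ∈ [t₀, t₁], and with y(t₀) = P (f t₀). Then ‖P (f t₁) − y t₁‖ ≤ C · exp(C·(t₁ − t₀)) · ( (t₁ − t₀)·‖f t₁ − P (f t₁)‖ + B·(t₁ − t₀)² ). (Core defect/Grönwall estimate in the proof of the GAP local error theorem: the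 Galerkin solution on the fixed subspace K tracks the projection of the exact solution up to the accumulated projection error.) -/
open Real Set

private lemma gronwallBound_le_aux {K ε x : ℝ} (hK : 0 ≤ K) (hε : 0 ≤ ε) (hx : 0 ≤ x) :
    gronwallBound 0 K ε x ≤ ε * x * Real.exp (K * x) := by
  rcases eq_or_lt_of_le hK with hK0 | hKpos
  · rw [← hK0, gronwallBound_K0]
    simp
  · rw [gronwallBound_of_K_ne_0 hKpos.ne']
    set E := Real.exp (K * x) with hE
    have hEpos : 0 < E := Real.exp_pos _
    have h1 : E * (1 - K * x) ≤ 1 := by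
      have h := Real.add_one_le_exp (-(K * x))
      rw [Real.exp_neg, ← hE] at h
      have := mul_le_mul_of_nonneg_left (by linarith : 1 - K * x ≤ E⁻¹) hEpos.le
      rwa [mul_inv_cancel₀ hEpos.ne'] at this
    have h2 : E - 1 ≤ K * x * E := by nlinarith
    calc 0 * E + ε / K * (E - 1) = ε / K * (E - 1) := by ring
      _ ≤ ε / K * (K * x * E) :=
          mul_le_mul_of_nonneg_left h2 (by positivity)
      _ = ε * x * E := by field_simp

/-- Core defect/Grönwall estimate in the proof of the GAP local error theorem: the
Galerkin solution `y` on the fixed subspace `K` tracks the projection of the exact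
solution `f` up to the accumulated projection error. -/
theorem gap_defect_gronwall_estimate
    {H : Type*} [NormedAddCommGroup H] [InnerProductSpace ℝ H]
    (K : Submodule ℝ H) [K.HasOrthogonalProjection]
    (P : H →L[ℝ] H) (hP : ∀ x, P x = (K.orthogonalProjectionOnto x : H))
    (𝓛 : H → H) (B C : ℝ) (hB : 0 ≤ B) (hC : 0 ≤ C)
    (hLip : ∀ u v, ‖𝓛 u - 𝓛 v‖ ≤ C * ‖u - v‖)
    (hBdd : ∀ u, ‖𝓛 u‖ ≤ B)
    (t₀ t₁ : ℝ) (ht : t₀ ≤ t₁)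
    (f y : ℝ → H)
    (hf : ∀ t ∈ Set.Icc t₀ t₁, HasDerivAt f (𝓛 (f t)) t)
    (hy : ∀ t ∈ Set.Icc t₀ t₁, HasDerivAt y (P (𝓛 (y t))) t)
    (hy0 : y t₀ = P (f t₀)) :
    ‖P (f t₁) - y t₁‖ ≤
      C * Real.exp (C * (t₁ - t₀)) *
        ((t₁ - t₀) * ‖f t₁ - P (f t₁)‖ + B * (t₁ - t₀) ^ 2) := by
  have hΔ : 0 ≤ t₁ - t₀ := by linarith
  -- The projection does not increase norms
  have hPle : ∀ x : H, ‖P x‖ ≤ ‖x‖ := by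
    intro x
    rw [hP]
    calc ‖(K.orthogonalProjectionOnto x : H)‖ = ‖K.orthogonalProjectionOnto x‖ := rfl
      _ ≤ ‖K.orthogonalProjectionOnto‖ * ‖x‖ := (K.orthogonalProjectionOnto).le_opNorm x
      _ ≤ 1 * ‖x‖ := mul_le_mul_of_nonneg_right (K.orthogonalProjectionOnto_norm_le) (norm_nonneg x)
      _ = ‖x‖ := one_mul _
  -- The complementary projection does not increase norms
  have hQle : ∀ x : H, ‖x - P x‖ ≤ ‖x‖ := by
    intro x
    set p : H := (K.orthogonalProjectionOnto x : H) with hp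
    have hPx : P x = p := hP x
    rw [hPx]
    have hin : inner ℝ (x - p) p = (0 : ℝ) :=
      K.starProjection_inner_eq_zero x p (K.orthogonalProjectionOnto x).2
    have hsq : ‖x‖ ^ 2 = ‖x - p‖ ^ 2 + ‖p‖ ^ 2 := by
      have h := norm_add_sq_real (x - p) p
      rw [sub_add_cancel, hin] at h
      linarith
    nlinarith [norm_nonneg x, norm_nonneg (x - p), norm_nonneg p]
  -- derivative of the "projection defect" h t = f t - P (f t)
  have hh' : ∀ t ∈ Icc t₀ t₁,
      HasDerivAt (fun s => f s - P (f s)) (𝓛 (f t) - P (𝓛 (f t))) t := by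
    intro t htt
    exact (hf t htt).sub (P.hasFDerivAt.comp_hasDerivAt t (hf t htt))
  -- bound on the projection defect
  have hhbd : ∀ t ∈ Icc t₀ t₁,
      ‖f t - P (f t)‖ ≤ ‖f t₁ - P (f t₁)‖ + B * (t₁ - t₀) := by
    intro t htt
    have key : ‖(f t₁ - P (f t₁)) - (f t - P (f t))‖ ≤ B * (t₁ - t) := by
      have := norm_image_sub_le_of_norm_deriv_le_segment' (a := t) (b := t₁)
        (f := fun s => f s - P (f s)) (f' := fun s => 𝓛 (f s) - P (𝓛 (f s))) (C := B)
        (fun s hs => (hh' s ⟨le_trans htt.1 hs.1, hs.2⟩).hasDerivWithinAt)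
        (fun s _ => (hQle (𝓛 (f s))).trans (hBdd (f s)))
        t₁ ⟨htt.2, le_refl t₁⟩
      exact this
    have h1 : ‖f t - P (f t)‖ ≤ ‖f t₁ - P (f t₁)‖ + ‖(f t₁ - P (f t₁)) - (f t - P (f t))‖ := by
      have := norm_sub_norm_le (f t₁ - P (f t₁)) (f t - P (f t))
      have := norm_sub_le (f t₁ - P (f t₁)) ((f t₁ - P (f t₁)) - (f t - P (f t)))
      calc ‖f t - P (f t)‖
          = ‖(f t₁ - P (f t₁)) - ((f t₁ - P (f t₁)) - (f t - P (f t)))‖ := by abel_nf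
        _ ≤ ‖f t₁ - P (f t₁)‖ + ‖(f t₁ - P (f t₁)) - (f t - P (f t))‖ := norm_sub_le _ _
    have h2 : B * (t₁ - t) ≤ B * (t₁ - t₀) := by nlinarith [htt.1]
    linarith
  -- Grönwall for g t = P (f t) - y t
  set ε : ℝ := C * (‖f t₁ - P (f t₁)‖ + B * (t₁ - t₀)) with hε
  have hεnn : 0 ≤ ε := by positivity
  have hg' : ∀ t ∈ Icc t₀ t₁,
      HasDerivAt (fun s => P (f s) - y s) (P (𝓛 (f t)) - P (𝓛 (y t))) t := by
    intro t htt
    exact (P.hasFDerivAt.comp_hasDerivAt t (hf t htt)).sub (hy t htt)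
  have bound : ∀ t ∈ Ico t₀ t₁,
      ‖P (𝓛 (f t)) - P (𝓛 (y t))‖ ≤ C * ‖P (f t) - y t‖ + ε := by
    intro t htt
    have htt' : t ∈ Icc t₀ t₁ := Ico_subset_Icc_self htt
    have e1 : ‖P (𝓛 (f t)) - P (𝓛 (y t))‖ ≤ ‖𝓛 (f t) - 𝓛 (y t)‖ := by
      calc ‖P (𝓛 (f t)) - P (𝓛 (y t))‖ = ‖P (𝓛 (f t) - 𝓛 (y t))‖ := by rw [map_sub]
        _ ≤ ‖𝓛 (f t) - 𝓛 (y t)‖ := hPle _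
    have e2 : ‖𝓛 (f t) - 𝓛 (y t)‖ ≤ C * ‖f t - y t‖ := hLip _ _
    have e3 : ‖f t - y t‖ ≤ ‖f t - P (f t)‖ + ‖P (f t) - y t‖ := by
      calc ‖f t - y t‖ = ‖(f t - P (f t)) + (P (f t) - y t)‖ := by abel_nf
        _ ≤ ‖f t - P (f t)‖ + ‖P (f t) - y t‖ := norm_add_le _ _
    have e4 := hhbd t htt'
    have : ‖P (𝓛 (f t)) - P (𝓛 (y t))‖ ≤ C * (‖f t - P (f t)‖ + ‖P (f t) - y t‖) :=
      e1.trans (e2.trans (mul_le_mul_of_nonneg_left e3 hC))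
    rw [hε]
    nlinarith [norm_nonneg (P (f t) - y t)]
  have gron := norm_le_gronwallBound_of_norm_deriv_right_le
    (f := fun s => P (f s) - y s) (f' := fun s => P (𝓛 (f s)) - P (𝓛 (y s)))
    (δ := 0) (K := C) (ε := ε) (a := t₀) (b := t₁)
    (fun s hs => ((hg' s hs).continuousAt).continuousWithinAt)
    (fun s hs => ((hg' s (Ico_subset_Icc_self hs)).hasDerivWithinAt))
    (by simp [hy0]) bound t₁ ⟨ht, le_refl t₁⟩
  have haux := gronwallBound_le_aux (K := C) (ε := ε) (x := t₁ - t₀) hC hεnn hΔ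
  calc ‖P (f t₁) - y t₁‖ ≤ gronwallBound 0 C ε (t₁ - t₀) := gron
    _ ≤ ε * (t₁ - t₀) * Real.exp (C * (t₁ - t₀)) := haux
    _ = C * Real.exp (C * (t₁ - t₀)) *
        ((t₁ - t₀) * ‖f t₁ - P (f t₁)‖ + B * (t₁ - t₀) ^ 2) := by rw [hε]; ring
end

section
/- Let H be a real Hilbert space, K a closed subspace of H, and P : H →L[ℝ] H the orthogonal projection onto K. Let 𝓛 : H → H satisfy ‖𝓛 u − 𝓛 v‖ ≤ C·‖u − v‖ for all u, v ∈ H and ‖𝓛 u‖ ≤ B for all u ∈ H, with constants B, C ≥ 0. Let t₀ ≤ t₁ and let f, y : ℝ → H be differentiable on [t₀, t₁] with f'(t) = 𝓛 (f t) and y'(t) = P (𝓛 (y t)) for all t ∈ [t₀, t₁], and with y(t₀) = P (f t₀). If δ ≥ 0 satisfies ‖f t₁ − P (f t₁)‖ ≤ δ, then ‖y t₁ − f t₁‖ ≤ δ + C · exp(C·(t₁ − t₀)) · ( δ·(t₁ − t₀) + B·(t₁ − t₀)² ). (The GAP local error theorem with the sub-optimality of the first-step subspace, established via the PSI local error, abstracted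 as the hypothesis on δ.) -/
open Set

lemma gap_aux_res {H : Type*} [NormedAddCommGroup H] [InnerProductSpace ℝ H]
    (K : Submodule ℝ H) [K.HasOrthogonalProjection] (x : H) :
    ‖x - (K.orthogonalProjectionOnto x : H)‖ ≤ ‖x‖ := by
  have h := Submodule.norm_sq_eq_add_norm_sq_projection x K
  have e : ((Kᗮ.orthogonalProjectionOnto x : H)) = x - (K.orthogonalProjectionOnto x : H) := by
    rw [← Submodule.starProjection_apply, ← Submodule.starProjection_apply]
    exact Submodule.starProjection_orthogonal_val x
  rw [← e]
  have hcoe : ‖((Kᗮ.orthogonalProjectionOnto) x : H)‖ = ‖(Kᗮ.orthogonalProjectionOnto) x‖ :=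
    Submodule.norm_coe _
  rw [hcoe]
  nlinarith [norm_nonneg ((Kᗮ.orthogonalProjectionOnto) x), norm_nonneg x,
    sq_nonneg ‖(K.orthogonalProjectionOnto) x‖]

/-- The GAP local error theorem, with the sub-optimality of the first-step subspace
abstracted as the hypothesis on `δ`: if the exact solution at time `t₁` is within `δ`
of the fixed subspace `K`, then the Galerkin approximation `y` has local error
`‖y t₁ − f t₁‖ ≤ δ + C e^{C(t₁−t₀)} (δ (t₁−t₀) + B (t₁−t₀)²)`. -/
theorem gap_local_error
    {H : Type*} [NormedAddCommGroup H] [InnerProductSpace ℝ H]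
    (K : Submodule ℝ H) [K.HasOrthogonalProjection]
    (P : H →L[ℝ] H) (hP : ∀ x, P x = (K.orthogonalProjectionOnto x : H))
    (𝓛 : H → H) (B C : ℝ) (hB : 0 ≤ B) (hC : 0 ≤ C)
    (hLip : ∀ u v, ‖𝓛 u - 𝓛 v‖ ≤ C * ‖u - v‖)
    (hBdd : ∀ u, ‖𝓛 u‖ ≤ B)
    (t₀ t₁ : ℝ) (ht : t₀ ≤ t₁)
    (f y : ℝ → H)
    (hf : ∀ t ∈ Set.Icc t₀ t₁, HasDerivAt f (𝓛 (f t)) t)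
    (hy : ∀ t ∈ Set.Icc t₀ t₁, HasDerivAt y (P (𝓛 (y t))) t)
    (hy0 : y t₀ = P (f t₀))
    (δ : ℝ) (hδ : 0 ≤ δ) (hproj : ‖f t₁ - P (f t₁)‖ ≤ δ) :
    ‖y t₁ - f t₁‖ ≤
      δ + C * Real.exp (C * (t₁ - t₀)) * (δ * (t₁ - t₀) + B * (t₁ - t₀) ^ 2) := by
  set T := t₁ - t₀ with hT
  have hT0 : 0 ≤ T := by simp [hT, ht]
  -- P is a contraction, and so is I - P
  have hPnorm : ∀ x : H, ‖P x‖ ≤ ‖x‖ := by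
    intro x
    rw [hP]
    calc ‖(K.orthogonalProjectionOnto x : H)‖ = ‖K.orthogonalProjectionOnto x‖ := rfl
      _ ≤ ‖K.orthogonalProjectionOnto‖ * ‖x‖ := (K.orthogonalProjectionOnto).le_opNorm x
      _ ≤ 1 * ‖x‖ := by
          exact mul_le_mul_of_nonneg_right (K.orthogonalProjectionOnto_norm_le) (norm_nonneg x)
      _ = ‖x‖ := one_mul _
  have hres : ∀ x : H, ‖x - P x‖ ≤ ‖x‖ := by
    intro x; rw [hP]; exact gap_aux_res K x
  -- f is B-Lipschitz in time on [t₀, t₁]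
  have hfLip : ∀ s ∈ Icc t₀ t₁, ‖f t₁ - f s‖ ≤ B * (t₁ - s) := by
    intro s hs
    have := (convex_Icc t₀ t₁).norm_image_sub_le_of_norm_hasDerivWithin_le
      (fun t htI => (hf t htI).hasDerivWithinAt) (fun t htI => hBdd (f t)) hs
      (right_mem_Icc.2 ht)
    calc ‖f t₁ - f s‖ ≤ B * ‖t₁ - s‖ := this
      _ = B * (t₁ - s) := by rw [Real.norm_eq_abs, abs_of_nonneg (by linarith [hs.2])]
  -- projection defect along the trajectory
  have hdefect : ∀ s ∈ Icc t₀ t₁, ‖f s - P (f s)‖ ≤ δ + B * T := by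
    intro s hs
    have key : f s - P (f s) =
        (f t₁ - P (f t₁)) - ((f t₁ - f s) - P (f t₁ - f s)) := by
      simp only [map_sub]; abel
    rw [key]
    calc ‖(f t₁ - P (f t₁)) - ((f t₁ - f s) - P (f t₁ - f s))‖
        ≤ ‖f t₁ - P (f t₁)‖ + ‖(f t₁ - f s) - P (f t₁ - f s)‖ := norm_sub_le _ _
      _ ≤ δ + ‖f t₁ - f s‖ := add_le_add hproj (hres _)
      _ ≤ δ + B * (t₁ - s) := by linarith [hfLip s hs]
      _ ≤ δ + B * T := by
          have : t₁ - s ≤ T := by simp [hT]; linarith [hs.1]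
          nlinarith
  -- the deviation g = y - P ∘ f
  set g : ℝ → H := fun t => y t - P (f t) with hg
  set ε : ℝ := C * (δ + B * T) with hε
  have hg' : ∀ t ∈ Icc t₀ t₁,
      HasDerivAt g (P (𝓛 (y t)) - P (𝓛 (f t))) t := fun t htI =>
    (hy t htI).sub (P.hasFDerivAt.comp_hasDerivAt t (hf t htI))
  have hgc : ContinuousOn g (Icc t₀ t₁) := fun t htI =>
    (hg' t htI).continuousAt.continuousWithinAt
  have hbound : ∀ t ∈ Ico t₀ t₁, ‖P (𝓛 (y t)) - P (𝓛 (f t))‖ ≤ C * ‖g t‖ + ε := by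
    intro t htI
    have htI' : t ∈ Icc t₀ t₁ := Ico_subset_Icc_self htI
    have h1 : ‖P (𝓛 (y t)) - P (𝓛 (f t))‖ ≤ C * ‖y t - f t‖ := by
      calc ‖P (𝓛 (y t)) - P (𝓛 (f t))‖ = ‖P (𝓛 (y t) - 𝓛 (f t))‖ := by rw [map_sub]
        _ ≤ ‖𝓛 (y t) - 𝓛 (f t)‖ := hPnorm _
        _ ≤ C * ‖y t - f t‖ := hLip _ _
    have h2 : ‖y t - f t‖ ≤ ‖g t‖ + (δ + B * T) := by
      have : y t - f t = g t - (f t - P (f t)) := by simp only [hg]; abel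
      rw [this]
      calc ‖g t - (f t - P (f t))‖ ≤ ‖g t‖ + ‖f t - P (f t)‖ := norm_sub_le _ _
        _ ≤ ‖g t‖ + (δ + B * T) := by linarith [hdefect t htI']
    calc ‖P (𝓛 (y t)) - P (𝓛 (f t))‖ ≤ C * ‖y t - f t‖ := h1
      _ ≤ C * (‖g t‖ + (δ + B * T)) := mul_le_mul_of_nonneg_left h2 hC
      _ = C * ‖g t‖ + ε := by ring
  have hg0 : ‖g t₀‖ ≤ 0 := by simp [hg, hy0]
  have hgron := norm_le_gronwallBound_of_norm_deriv_right_le hgc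
    (fun t htI => (hg' t (Ico_subset_Icc_self htI)).hasDerivWithinAt)
    hg0 hbound t₁ (right_mem_Icc.2 ht)
  -- final arithmetic
  have hfinal : gronwallBound 0 C ε T ≤
      C * Real.exp (C * T) * (δ * T + B * T ^ 2) := by
    rcases eq_or_ne C 0 with hC0 | hC0
    · simp [gronwallBound_K0, hC0, hε]
    · rw [gronwallBound_of_K_ne_0 hC0]
      have hexp : Real.exp (C * T) - 1 ≤ C * T * Real.exp (C * T) := by
        have h1 : 1 - C * T ≤ Real.exp (-(C * T)) := by
          have := Real.add_one_le_exp (-(C * T)); linarith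
        have h2 : Real.exp (-(C * T)) * Real.exp (C * T) = 1 := by
          rw [← Real.exp_add]; simp
        nlinarith [Real.exp_pos (C * T)]
      have hεC : ε / C = δ + B * T := by rw [hε]; field_simp
      rw [hεC]
      have hnn : 0 ≤ δ + B * T := by positivity
      calc 0 * Real.exp (C * T) + (δ + B * T) * (Real.exp (C * T) - 1)
          ≤ 0 + (δ + B * T) * (C * T * Real.exp (C * T)) := by
            rw [zero_mul]
            exact add_le_add_right (mul_le_mul_of_nonneg_left hexp hnn) 0
        _ = C * Real.exp (C * T) * (δ * T + B * T ^ 2) := by ring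
  have hsplit : ‖y t₁ - f t₁‖ ≤ ‖g t₁‖ + ‖f t₁ - P (f t₁)‖ := by
    have : y t₁ - f t₁ = g t₁ - (f t₁ - P (f t₁)) := by simp only [hg]; abel
    rw [this]; exact norm_sub_le _ _
  have hsub : t₁ - t₀ = T := rfl
  calc ‖y t₁ - f t₁‖ ≤ ‖g t₁‖ + ‖f t₁ - P (f t₁)‖ := hsplit
    _ ≤ gronwallBound 0 C ε T + δ := by
        rw [hsub] at hgron; exact add_le_add hgron hproj
    _ ≤ C * Real.exp (C * T) * (δ * T + B * T ^ 2) + δ := add_le_add_left hfinal _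
    _ = δ + C * Real.exp (C * (t₁ - t₀)) * (δ * (t₁ - t₀) + B * (t₁ - t₀) ^ 2) := by
        rw [← hsub]; ring
end
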